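/- The number of 1̲2̲0-avoiding inversion sequences of length n whose last entry is 0 equals the Bell number B_{n-1}. -/

import Mathlib

open scoped Classical

/-- `e` is an inversion sequence (0-based indexing: `e i < i+1`, i.e. `e i ≤ i`). -/
def IsInvSeq (e : List ℕ) : Prop := ∀ i, i < e.length → e.getD i 0 ≤ i

/-- Number of ascents of `e`. -/
def ascents (e : List ℕ) : ℕ :=
  ((List.range (e.length - 1)).filter (fun i => decide (e.getD i 0 < e.getD (i + 1) 0))).length

/-- `e` is an ascent sequence. -/
def IsAscSeq (e : List ℕ) : Prop :=
  IsInvSeq e ∧ ∀ i, i + 1 < e.length → e.getD (i + 1) 0 ≤ ascents (e.take (i + 1)) + 1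

/-- `e` avoids the vincular pattern 12-0 : no indices `1 ≤ i < j < e.length`
(0-based) with `e j < e (i-1) < e i`. -/
def Avoids120 (e : List ℕ) : Prop :=
  ¬ ∃ i j, 1 ≤ i ∧ i < j ∧ j < e.length ∧
      e.getD j 0 < e.getD (i - 1) 0 ∧ e.getD (i - 1) 0 < e.getD i 0

/-- `e` is primitive: no two equal consecutive entries. -/
def IsPrimitive (e : List ℕ) : Prop := ∀ i, i + 1 < e.length → e.getD i 0 ≠ e.getD (i + 1) 0

/-! ### Auxiliary development -/

lemma getD_take' {l : List ℕ} {k i : ℕ} (h : i < k) : (l.take k).getD i 0 = l.getD i 0 := by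
  simp [List.getD_eq_getElem?_getD, List.getElem?_take, h]

lemma getD_drop' (l : List ℕ) (k i : ℕ) : (l.drop k).getD i 0 = l.getD (k + i) 0 := by
  simp [List.getD_eq_getElem?_getD, List.getElem?_drop]

/-- Weakly decreasing lists of positive values `≤ v`, of length `ℓ`. -/
def Dset : ℕ → ℕ → Finset (List ℕ)
  | _, 0 => {[]}
  | v, (ℓ+1) => (Finset.Icc 1 v).biUnion (fun x => (Dset x ℓ).image (fun r => x :: r))

lemma mem_Dset : ∀ (ℓ v : ℕ) (r : List ℕ), r ∈ Dset v ℓ ↔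
    (r.length = ℓ ∧ (∀ i < ℓ, 1 ≤ r.getD i 0) ∧
      (∀ i, i + 1 < ℓ → r.getD (i+1) 0 ≤ r.getD i 0) ∧ r.getD 0 0 ≤ v) := by
  intro ℓ
  induction ℓ with
  | zero =>
    intro v r
    simp only [Dset, Finset.mem_singleton]
    constructor
    · rintro rfl
      refine ⟨rfl, by intro i hi; omega, by intro i hi; omega, by simp⟩
    · rintro ⟨h, -⟩; exact List.length_eq_zero_iff.mp h
  | succ ℓ ih =>
    intro v r
    simp only [Dset, Finset.mem_biUnion, Finset.mem_image, Finset.mem_Icc]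
    constructor
    · rintro ⟨x, ⟨hx1, hxv⟩, s, hs, rfl⟩
      obtain ⟨hlen, hpos, hdec, hhead⟩ := (ih x s).mp hs
      refine ⟨by simp [hlen], ?_, ?_, by simpa using hxv⟩
      · intro i hi
        cases i with
        | zero => simpa using hx1
        | succ j =>
          rw [List.getD_cons_succ]
          exact hpos j (by omega)
      · intro i hi
        cases i with
        | zero =>
          rw [List.getD_cons_succ, List.getD_cons_zero]
          exact hhead
        | succ j =>
          rw [List.getD_cons_succ, List.getD_cons_succ]
          exact hdec j (by omega)
    · rintro ⟨hlen, hpos, hdec, hhead⟩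
      match r with
      | [] => simp at hlen
      | x :: s =>
        have hslen : s.length = ℓ := by simpa using hlen
        refine ⟨x, ⟨by simpa using hpos 0 (by omega), by simpa using hhead⟩, s, ?_, rfl⟩
        refine (ih x s).mpr ⟨hslen, ?_, ?_, ?_⟩
        · intro i hi
          have := hpos (i+1) (by omega)
          simpa using this
        · intro i hi
          have := hdec (i+1) (by omega)
          simpa using this
        · rcases Nat.eq_zero_or_pos ℓ with h0 | h0
          · rw [List.getD_eq_default _ _ (by omega)]; omega
          · have := hdec 0 (by omega)
            simpa using this

lemma Dset_card : ∀ (ℓ v : ℕ), (Dset (v+1) ℓ).card = Nat.choose (v + ℓ) ℓ := by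
  intro ℓ
  induction ℓ with
  | zero => intro v; simp [Dset]
  | succ ℓ ih =>
    intro v
    have hdisj : ∀ x ∈ Finset.Icc 1 (v+1), ∀ y ∈ Finset.Icc 1 (v+1), x ≠ y →
        Disjoint ((Dset x ℓ).image (fun r => x :: r)) ((Dset y ℓ).image (fun r => y :: r)) := by
      intro x _ y _ hxy
      rw [Finset.disjoint_left]
      intro a ha hb
      simp only [Finset.mem_image] at ha hb
      obtain ⟨s, -, rfl⟩ := ha
      obtain ⟨t, -, ht⟩ := hb
      exact hxy (List.cons_eq_cons.mp ht.symm).1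
    rw [show Dset (v+1) (ℓ+1)
        = (Finset.Icc 1 (v+1)).biUnion (fun x => (Dset x ℓ).image (fun r => x :: r)) from rfl,
      Finset.card_biUnion hdisj]
    have h1 : ∀ x ∈ Finset.Icc 1 (v+1),
        ((Dset x ℓ).image (fun r => x :: r)).card = Nat.choose (x - 1 + ℓ) ℓ := by
      intro x hx
      rw [Finset.card_image_of_injective _ (fun a b h => by injection h)]
      simp only [Finset.mem_Icc] at hx
      obtain ⟨y, rfl⟩ : ∃ y, x = y + 1 := ⟨x - 1, by omega⟩
      simpa using ih y
    rw [Finset.sum_congr rfl h1]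
    clear h1 hdisj ih
    induction v with
    | zero => simp
    | succ v ihv =>
      rw [Finset.sum_Icc_succ_top (by omega), ihv]
      rw [show v + 1 + 1 - 1 + ℓ = v + 1 + ℓ by omega,
        show v + 1 + (ℓ + 1) = (v + 1 + ℓ) + 1 by ring,
        Nat.choose_succ_succ (v + 1 + ℓ) ℓ,
        show v + (ℓ + 1) = v + 1 + ℓ by omega]
      simp only [Nat.succ_eq_add_one]
      omega

/-- The local characterization of our sequences. -/
def Ok (n : ℕ) (e : List ℕ) : Prop :=
  e.length = n ∧ (∀ i < n, e.getD i 0 ≤ i) ∧ e.getD (n-1) 0 = 0 ∧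
    ∀ i, 0 < i → i < n → e.getD (i-1) 0 < e.getD i 0 → e.getD (i-1) 0 = 0

/-- Recursive construction of all `Ok` sequences. -/
def Fam : ℕ → Finset (List ℕ)
  | 0 => ∅
  | 1 => {[0]}
  | (n+2) => (Finset.range (n+1)).attach.biUnion
      (fun p => ((Fam (p.1+1)) ×ˢ Dset (p.1+1) (n - p.1)).image
        (fun q => q.1 ++ q.2 ++ [0]))
decreasing_by
  have := p.2; simp only [Finset.mem_range] at this; omega

lemma mem_Fam : ∀ n, 1 ≤ n → ∀ e, (e ∈ Fam n ↔ Ok n e) := by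
  intro n
  induction n using Nat.strong_induction_on with
  | _ n ih =>
  obtain _ | _ | n := n
  · intro h; exact absurd h (by omega)
  · show 1 ≤ 1 → ∀ e, (e ∈ Fam 1 ↔ Ok 1 e)
    intro _ e
    constructor
    · intro he
      simp only [Fam, Finset.mem_singleton] at he
      subst he
      exact ⟨rfl, by intro i hi; interval_cases i; simp, rfl, by intro i h0 h1; omega⟩
    · rintro ⟨hlen, hbd, hlast, -⟩
      obtain ⟨a, rfl⟩ := List.length_eq_one_iff.mp hlen
      have ha : a = 0 := by simpa using hlast
      simp [Fam, ha]
  · show 1 ≤ n + 2 → ∀ e, (e ∈ Fam (n+2) ↔ Ok (n+2) e)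
    intro _ e
    constructor
    · -- membership → Ok
      intro he
      simp only [Fam, Finset.mem_biUnion, Finset.mem_attach, true_and, Finset.mem_image,
        Finset.mem_product, Subtype.exists, Finset.mem_range] at he
      obtain ⟨p, hp, ⟨pre, run⟩, ⟨hpre, hrun⟩, rfl⟩ := he
      have hp' : p ≤ n := by omega
      obtain ⟨hplen, hpbd, hplast, hpasc⟩ := (ih (p+1) (by omega) (by omega) pre).mp hpre
      obtain ⟨hrlen, hrpos, hrdec, hrhead⟩ := (mem_Dset (n-p) (p+1) run).mp hrun
      simp only at *
      have hL : (pre ++ run).length = n + 1 := by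
        simp only [List.length_append, hplen, hrlen]; omega
      have helen : (pre ++ run ++ [0]).length = n + 2 := by
        simp only [List.length_append, hL, List.length_singleton]
      have hgetpre : ∀ i, i ≤ p → (pre ++ run ++ [0]).getD i 0 = pre.getD i 0 := by
        intro i hi
        rw [List.getD_append _ _ _ _ (by omega), List.getD_append _ _ _ _ (by omega)]
      have hgetrun : ∀ i, p < i → i ≤ n →
          (pre ++ run ++ [0]).getD i 0 = run.getD (i - (p+1)) 0 := by
        intro i h1 h2
        rw [List.getD_append _ _ _ _ (by omega),
          List.getD_append_right _ _ _ _ (by omega), hplen]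
      have hgetlast : (pre ++ run ++ [0]).getD (n+1) 0 = 0 := by
        rw [List.getD_append_right _ _ _ _ (by omega), hL]
        simp
      have hrbd : ∀ j, run.getD j 0 ≤ run.getD 0 0 := by
        intro j
        induction j with
        | zero => exact le_rfl
        | succ j ihj =>
          rcases lt_or_ge (j+1) (n-p) with h | h
          · exact le_trans (hrdec j h) ihj
          · rw [List.getD_eq_default _ _ (by omega)]; omega
      refine ⟨helen, ?_, ?_, ?_⟩
      · intro i hi
        rcases le_or_gt i p with h | h
        · rw [hgetpre i h]; exact hpbd i (by omega)
        · rcases le_or_gt i n with h2 | h2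
          · rw [hgetrun i h h2]
            calc run.getD (i - (p+1)) 0 ≤ run.getD 0 0 := hrbd _
            _ ≤ p + 1 := hrhead
            _ ≤ i := by omega
          · have hi2 : i = n + 1 := by omega
            rw [hi2, hgetlast]; omega
      · rw [show n + 2 - 1 = n + 1 by omega, hgetlast]
      · intro i h0 hin hascend
        rcases le_or_gt i p with h | h
        · rw [hgetpre (i-1) (by omega), hgetpre i h] at hascend
          rw [hgetpre (i-1) (by omega)]
          exact hpasc i h0 (by omega) hascend
        · rcases eq_or_lt_of_le (Nat.succ_le_of_lt h) with h1 | h1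
          · rw [hgetpre (i-1) (by omega)]
            rw [show i - 1 = (p+1) - 1 by omega]
            exact hplast
          · rcases le_or_gt i n with h2 | h2
            · rw [hgetrun (i-1) (by omega) (by omega), hgetrun i (by omega) h2] at hascend
              rw [show i - (p+1) = (i - 1 - (p+1)) + 1 by omega] at hascend
              have := hrdec (i - 1 - (p+1)) (by omega)
              omega
            · rw [show i = n + 1 by omega, hgetlast] at hascend
              omega
    · -- Ok → membership
      rintro ⟨hlen, hbd, hlast, hasc⟩
      rw [show n + 2 - 1 = n + 1 by omega] at hlast
      have h00 : e.getD 0 0 = 0 := by have := hbd 0 (by omega); omega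
      obtain ⟨p, hpn, hp0, hgt⟩ :
          ∃ p, p ≤ n ∧ e.getD p 0 = 0 ∧ ∀ m, p < m → m ≤ n → e.getD m 0 ≠ 0 := by
        refine ⟨Nat.findGreatest (fun m => e.getD m 0 = 0) n, Nat.findGreatest_le n,
          Nat.findGreatest_spec (P := fun m => e.getD m 0 = 0) (Nat.zero_le n) h00, ?_⟩
        intro m h1 h2
        exact Nat.findGreatest_is_greatest (P := fun m => e.getD m 0 = 0) h1 h2
      set pre := e.take (p+1) with hpre
      set run := (e.drop (p+1)).take (n - p) with hrun
      have hprelen : pre.length = p + 1 := by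
        rw [hpre, List.length_take, hlen]; omega
      have hrunlen : run.length = n - p := by
        rw [hrun, List.length_take, List.length_drop, hlen]; omega
      have hpreget : ∀ i, i ≤ p → pre.getD i 0 = e.getD i 0 := by
        intro i hi
        rw [hpre, getD_take' (by omega)]
      have hrunget : ∀ j, j < n - p → run.getD j 0 = e.getD (p + 1 + j) 0 := by
        intro j hj
        rw [hrun, getD_take' hj, getD_drop']
      have htail : (e.drop (p+1)).drop (n - p) = [0] := by
        rw [List.drop_drop]
        have hlen1 : (e.drop (p + 1 + (n - p))).length = 1 := by
          rw [List.length_drop, hlen]; omega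
        obtain ⟨a, ha⟩ := List.length_eq_one_iff.mp hlen1
        have h3 : (e.drop (p + 1 + (n - p))).getD 0 0 = 0 := by
          rw [getD_drop', show p + 1 + (n - p) + 0 = n + 1 by omega]
          exact hlast
        rw [ha] at h3 ⊢
        simp only [List.getD_cons_zero] at h3
        rw [h3]
      have hdecomp : e = pre ++ run ++ [0] := by
        rw [hpre, hrun, List.append_assoc, ← htail, List.take_append_drop,
          List.take_append_drop]
      simp only [Fam, Finset.mem_biUnion, Finset.mem_attach, true_and, Finset.mem_image,
        Finset.mem_product, Subtype.exists, Finset.mem_range]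
      refine ⟨p, by omega, (pre, run), ⟨?_, ?_⟩, hdecomp.symm⟩
      · -- pre ∈ Fam (p+1)
        refine (ih (p+1) (by omega) (by omega) pre).mpr ⟨hprelen, ?_, ?_, ?_⟩
        · intro i hi
          rw [hpreget i (by omega)]
          exact hbd i (by omega)
        · rw [show p + 1 - 1 = p by omega, hpreget p le_rfl]
          exact hp0
        · intro i h0 hip hascend
          rw [hpreget (i-1) (by omega), hpreget i (by omega)] at hascend
          rw [hpreget (i-1) (by omega)]
          exact hasc i h0 (by omega) hascend
      · -- run ∈ Dset (p+1) (n-p)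
        refine (mem_Dset (n-p) (p+1) run).mpr ⟨hrunlen, ?_, ?_, ?_⟩
        · intro j hj
          rw [hrunget j hj]
          have := hgt (p + 1 + j) (by omega) (by omega)
          omega
        · intro j hj
          rw [hrunget j (by omega), hrunget (j+1) (by omega)]
          by_contra hcon
          push_neg at hcon
          have h4 := hasc (p + 1 + j + 1) (by omega) (by omega)
          rw [show p + 1 + j + 1 - 1 = p + 1 + j by omega] at h4
          have h5 := h4 (by rw [show p + 1 + (j+1) = p + 1 + j + 1 by omega] at hcon; omega)
          exact hgt (p + 1 + j) (by omega) (by omega) h5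
        · rcases Nat.eq_zero_or_pos (n - p) with h0 | h0
          · rw [List.getD_eq_default _ _ (by omega)]; omega
          · rw [hrunget 0 (by omega), Nat.add_zero]
            have := hbd (p+1) (by omega)
            omega

lemma Fam_length : ∀ n, 1 ≤ n → ∀ e ∈ Fam n, e.length = n := by
  intro n hn e he
  exact ((mem_Fam n hn e).mp he).1

lemma Fam_rec_card (n : ℕ) : (Fam (n+2)).card
    = ∑ p ∈ Finset.range (n+1), (Fam (p+1)).card * Nat.choose n p := by
  have key : ∀ p : ℕ, p < n+1 → ∀ e ∈ ((Fam (p+1)) ×ˢ Dset (p+1) (n-p)).image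
      (fun q : List ℕ × List ℕ => q.1 ++ q.2 ++ [0]),
      e.getD p 0 = 0 ∧ ∀ m, p < m → m ≤ n → e.getD m 0 ≠ 0 := by
    intro p hp e he
    simp only [Finset.mem_image, Finset.mem_product] at he
    obtain ⟨⟨pre, run⟩, ⟨hpre, hrun⟩, rfl⟩ := he
    obtain ⟨hplen, -, hplast, -⟩ := (mem_Fam (p+1) (by omega) pre).mp hpre
    obtain ⟨hrlen, hrpos, -, -⟩ := (mem_Dset (n-p) (p+1) run).mp hrun
    simp only at *
    have hL : (pre ++ run).length = n + 1 := by
      simp only [List.length_append, hplen, hrlen]; omega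
    constructor
    · rw [List.getD_append _ _ _ _ (by omega), List.getD_append _ _ _ _ (by omega)]
      rw [show p + 1 - 1 = p by omega] at hplast
      exact hplast
    · intro m h1 h2
      rw [List.getD_append _ _ _ _ (by omega),
        List.getD_append_right _ _ _ _ (by omega), hplen]
      have := hrpos (m - (p+1)) (by omega)
      omega
  have hdisj : ∀ p ∈ (Finset.range (n+1)).attach, ∀ q ∈ (Finset.range (n+1)).attach, p ≠ q →
      Disjoint (((Fam (p.1+1)) ×ˢ Dset (p.1+1) (n - p.1)).image
          (fun q => q.1 ++ q.2 ++ [0]))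
        (((Fam (q.1+1)) ×ˢ Dset (q.1+1) (n - q.1)).image
          (fun q => q.1 ++ q.2 ++ [0])) := by
    intro p _ q _ hpq
    rw [Finset.disjoint_left]
    intro e hep heq
    have h1 := key p.1 (Finset.mem_range.mp p.2) e hep
    have h2 := key q.1 (Finset.mem_range.mp q.2) e heq
    have hne : p.1 ≠ q.1 := fun h => hpq (Subtype.ext h)
    rcases lt_or_gt_of_ne hne with h | h
    · exact h1.2 q.1 h (by have := Finset.mem_range.mp q.2; omega) h2.1
    · exact h2.2 p.1 h (by have := Finset.mem_range.mp p.2; omega) h1.1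
  rw [show Fam (n+2) = (Finset.range (n+1)).attach.biUnion
      (fun p => ((Fam (p.1+1)) ×ˢ Dset (p.1+1) (n - p.1)).image
        (fun q => q.1 ++ q.2 ++ [0])) from by rw [Fam],
    Finset.card_biUnion hdisj]
  have himg : ∀ p ∈ (Finset.range (n+1)).attach,
      (((Fam (p.1+1)) ×ˢ Dset (p.1+1) (n - p.1)).image
        (fun q : List ℕ × List ℕ => q.1 ++ q.2 ++ [0])).card
      = (Fam (p.1+1)).card * Nat.choose n p.1 := by
    intro p _
    have hp := Finset.mem_range.mp p.2
    rw [Finset.card_image_of_injOn, Finset.card_product]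
    · congr 1
      rw [Dset_card (n - p.1) p.1, show p.1 + (n - p.1) = n by omega,
        Nat.choose_symm (by omega)]
    · rintro ⟨a, b⟩ hab ⟨c, d⟩ hcd h
      simp only [Finset.coe_product, Set.mem_prod, Finset.mem_coe] at hab hcd
      obtain ⟨ha, hb⟩ := hab
      obtain ⟨hc, hd⟩ := hcd
      have la : a.length = p.1 + 1 := ((mem_Fam _ (by omega) a).mp ha).1
      have lc : c.length = p.1 + 1 := ((mem_Fam _ (by omega) c).mp hc).1
      have lb : b.length = n - p.1 := ((mem_Dset _ _ b).mp hb).1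
      have ld : d.length = n - p.1 := ((mem_Dset _ _ d).mp hd).1
      simp only at h
      obtain ⟨h1, -⟩ := List.append_inj h (by simp only [List.length_append, la, lb, lc, ld])
      obtain ⟨h3, h4⟩ := List.append_inj h1 (by omega)
      simp only [Prod.mk.injEq]
      exact ⟨h3, h4⟩
  rw [Finset.sum_congr rfl himg]
  exact Finset.sum_attach (Finset.range (n+1)) (fun p => (Fam (p+1)).card * Nat.choose n p)

lemma Fam_card_Bell (B : ℕ → ℕ) (hB0 : B 0 = 1)
    (hBrec : ∀ m, B (m + 1) = ∑ j ∈ Finset.range (m + 1), Nat.choose m j * B j) :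
    ∀ n, 1 ≤ n → (Fam n).card = B (n - 1) := by
  intro n
  induction n using Nat.strong_induction_on with
  | _ n ih =>
  obtain _ | _ | n := n
  · intro h; exact absurd h (by omega)
  · show 1 ≤ 1 → (Fam 1).card = B (1 - 1)
    intro _
    simp [Fam, hB0]
  · show 1 ≤ n + 2 → (Fam (n+2)).card = B (n + 2 - 1)
    intro _
    rw [Fam_rec_card n, show n + 2 - 1 = n + 1 by omega, hBrec n]
    refine Finset.sum_congr rfl ?_
    intro p hp
    have hp' := Finset.mem_range.mp hp
    rw [ih (p+1) (by omega) (by omega), show p + 1 - 1 = p from rfl, Nat.mul_comm]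

theorem stmt16 (B : ℕ → ℕ) (hB0 : B 0 = 1)
    (hBrec : ∀ m, B (m + 1) = ∑ j ∈ Finset.range (m + 1), Nat.choose m j * B j)
    (n : ℕ) (hn : 1 ≤ n) :
    {e : List ℕ | e.length = n ∧ IsInvSeq e ∧ Avoids120 e ∧
        e.getD (e.length - 1) 0 = 0}.ncard = B (n - 1) := by
  have hset : {e : List ℕ | e.length = n ∧ IsInvSeq e ∧ Avoids120 e ∧
      e.getD (e.length - 1) 0 = 0} = ↑(Fam n) := by
    ext e
    simp only [Set.mem_setOf_eq, Finset.coe_sort_coe, Finset.mem_coe]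
    rw [mem_Fam n hn e]
    constructor
    · rintro ⟨hlen, hinv, hav, hlast⟩
      rw [hlen] at hlast
      refine ⟨hlen, fun i hi => hinv i (by rw [hlen]; exact hi), hlast, ?_⟩
      intro i h0 hin hascend
      by_contra hne
      rcases lt_or_ge i (n-1) with hlt | hge
      · exact hav ⟨i, n-1, h0, hlt, by rw [hlen]; omega, by omega, hascend⟩
      · have hieq : i = n - 1 := by omega
        rw [hieq, hlast] at hascend
        omega
    · rintro ⟨hlen, hbd, hlast, hasc⟩
      refine ⟨hlen, fun i hi => hbd i (by rw [← hlen]; exact hi), ?_, by rw [hlen]; exact hlast⟩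
      rintro ⟨i, j, h1, hij, hjn, hji, hii⟩
      rw [hlen] at hjn
      have h2 := hasc i h1 (by omega) hii
      omega
  rw [hset, Set.ncard_coe_finset]
  exact Fam_card_Bell B hB0 hBrec n hn
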